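/- Let 0 < eta < 1 and consider minimizing (eta/(1-eta)) R_0 c_1 + sum_{k=1}^M Delta R_k ( c_k - (1/2)( (2-eta)/(1-eta) - (2/(1-eta)) (sigma^2/n)(Delta d_k / Delta R_k) ) )^2 subject to 1 = c_1 ≥ c_2 ≥ ... ≥ c_M ≥ 0, where Delta R_k > 0 and Delta d_k > 0. Writing beta_k = 1 - c_k, the minimizer satisfies beta_1 = 0 and, for k = 2,...,M, beta_k = 1 - clip( (1/(1-eta)) ( 1 - eta/2 - (sigma^2/n) min_{k≤i≤M} max_{1≤j<k} (d_i - d_j)/(R_j - R_i) ) ), where clip(z) = min(1, max(0, z)). -/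

import Mathlib

open Finset

noncomputable def Vmm (M : ℕ) (d R : ℕ → ℝ) (k : ℕ) : ℝ :=
  if h : 2 ≤ k ∧ k ≤ M then
    (Finset.Icc k M).inf' (Finset.nonempty_Icc.mpr h.2)
      (fun i => (Finset.Icc 1 (k - 1)).sup'
        (Finset.nonempty_Icc.mpr (Nat.le_sub_of_add_le h.1))
        (fun j => (d i - d j) / (R j - R i)))
  else 0

section core
variable {M : ℕ} {d R : ℕ → ℝ}
lemma R_strict (hΔR : ∀ k, 1 ≤ k → k ≤ M → 0 < R (k - 1) - R k) : ∀ i, i ≤ M → ∀ j, j < i → R i < R j := by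
  intro i
  induction i with
  | zero => omega
  | succ n ih =>
    intro hM j hj
    have h1 : R (n+1) < R n := by
      have := hΔR (n+1) (by omega) hM
      simp only [Nat.add_sub_cancel] at this
      linarith
    rcases Nat.lt_or_ge j n with h | h
    · exact lt_trans h1 (ih (by omega) j h)
    · have : j = n := by omega
      subst this; exact h1

lemma mediant (n1 n2 w1 w2 : ℝ) (h1 : 0 < w1) (h2 : 0 < w2) :
    (n1 + n2) / (w1 + w2) ≤ max (n1 / w1) (n2 / w2) ∧
    min (n1 / w1) (n2 / w2) ≤ (n1 + n2) / (w1 + w2) := by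
  constructor
  · rw [div_le_iff₀ (by linarith)]
    have a1 : n1 ≤ w1 * max (n1 / w1) (n2 / w2) := by
      rw [← div_le_iff₀' h1]; exact le_max_left _ _
    have a2 : n2 ≤ w2 * max (n1 / w1) (n2 / w2) := by
      rw [← div_le_iff₀' h2]; exact le_max_right _ _
    nlinarith
  · rw [le_div_iff₀ (by linarith)]
    have a1 : w1 * min (n1 / w1) (n2 / w2) ≤ n1 := by
      rw [← le_div_iff₀' h1]; exact min_le_left _ _
    have a2 : w2 * min (n1 / w1) (n2 / w2) ≤ n2 := by
      rw [← le_div_iff₀' h2]; exact min_le_right _ _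
    nlinarith

/-- slope splitting -/
lemma slope_split (hΔR : ∀ k, 1 ≤ k → k ≤ M → 0 < R (k - 1) - R k) {j k i : ℕ} (hj : j < k) (hk : k < i) (hi : i ≤ M) :
    (d i - d j) / (R j - R i) ≤ max ((d k - d j) / (R j - R k)) ((d i - d k) / (R k - R i)) ∧
    min ((d k - d j) / (R j - R k)) ((d i - d k) / (R k - R i)) ≤ (d i - d j) / (R j - R i) := by
  have w1 : 0 < R j - R k := sub_pos.mpr (R_strict hΔR k (by omega) j hj)
  have w2 : 0 < R k - R i := sub_pos.mpr (R_strict hΔR i hi k hk)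
  have e1 : d i - d j = (d k - d j) + (d i - d k) := by ring
  have e2 : R j - R i = (R j - R k) + (R k - R i) := by ring
  rw [e1, e2]
  exact mediant _ _ _ _ w1 w2

lemma Vmm_eq (hk2 : 2 ≤ k) (hkM : k ≤ M) :
    Vmm M d R k = (Finset.Icc k M).inf' (Finset.nonempty_Icc.mpr hkM)
      (fun i => (Finset.Icc 1 (k - 1)).sup'
        (Finset.nonempty_Icc.mpr (Nat.le_sub_of_add_le hk2))
        (fun j => (d i - d j) / (R j - R i))) := by
  rw [Vmm, dif_pos ⟨hk2, hkM⟩]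

lemma Vmm_le_of {k i : ℕ} (hk2 : 2 ≤ k) (hkM : k ≤ M) (hki : k ≤ i) (hiM : i ≤ M) :
    ∃ j, 1 ≤ j ∧ j ≤ k - 1 ∧ Vmm M d R k ≤ (d i - d j) / (R j - R i) := by
  rw [Vmm_eq hk2 hkM]
  obtain ⟨j, hj, hje⟩ := Finset.exists_mem_eq_sup' (s := Finset.Icc 1 (k-1)) (Finset.nonempty_Icc.mpr (show 1 ≤ k-1 by omega)) (fun j => (d i - d j) / (R j - R i))
  simp only [Finset.mem_Icc] at hj
  refine ⟨j, hj.1, hj.2, ?_⟩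
  calc _ ≤ _ := Finset.inf'_le _ (Finset.mem_Icc.mpr ⟨hki, hiM⟩)
  _ = _ := hje

lemma Vmm_ge (hk2 : 2 ≤ k) (hkM : k ≤ M) :
    ∃ i, k ≤ i ∧ i ≤ M ∧ ∀ j, 1 ≤ j → j ≤ k - 1 →
      (d i - d j) / (R j - R i) ≤ Vmm M d R k := by
  rw [Vmm_eq hk2 hkM]
  obtain ⟨i, hi, hie⟩ := Finset.exists_mem_eq_inf' (Finset.nonempty_Icc.mpr hkM)
    (fun i => ((Finset.Icc 1 (k - 1)).sup' (Finset.nonempty_Icc.mpr (show 1 ≤ k-1 by omega)) (fun j => (d i - d j) / (R j - R i)) : ℝ))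
  simp only [Finset.mem_Icc] at hi
  refine ⟨i, hi.1, hi.2, fun j hj1 hjk => ?_⟩
  rw [hie]
  exact Finset.le_sup' (fun j => (d i - d j) / (R j - R i)) (Finset.mem_Icc.mpr ⟨hj1, hjk⟩)

lemma Vmono (hk2 : 2 ≤ k) (hkM : k + 1 ≤ M) :
    Vmm M d R k ≤ Vmm M d R (k + 1) := by
  obtain ⟨i, hi1, hi2, hib⟩ := Vmm_ge (M := M) (d := d) (R := R) (by omega : 2 ≤ k+1) hkM
  have step : Vmm M d R k ≤ (Finset.Icc 1 (k-1)).sup'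
      (Finset.nonempty_Icc.mpr (Nat.le_sub_of_add_le hk2))
      (fun j => (d i - d j) / (R j - R i)) := by
    rw [Vmm_eq hk2 (by omega)]
    exact Finset.inf'_le _ (Finset.mem_Icc.mpr ⟨by omega, hi2⟩)
  refine le_trans step (Finset.sup'_le _ _ fun j hj => ?_)
  simp only [Finset.mem_Icc] at hj
  exact hib j hj.1 (by omega)

lemma Vmono_chain (hk2 : 2 ≤ k) (hkm : k ≤ m) (hmM : m ≤ M) :
    Vmm M d R k ≤ Vmm M d R m := by
  induction m with
  | zero => omega
  | succ n ih =>
    rcases Nat.lt_or_ge k (n+1) with h | h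
    · exact le_trans (ih (by omega) (by omega)) (Vmono (by omega) hmM)
    · have : k = n + 1 := by omega
      subst this; rfl

lemma L1 (hΔR : ∀ k, 1 ≤ k → k ≤ M → 0 < R (k - 1) - R k)
    (hk2 : 2 ≤ k) (hkM : k + 1 ≤ M)
    (hlt : Vmm M d R k < Vmm M d R (k + 1)) :
    ∀ j, 1 ≤ j → j ≤ k - 1 → (d k - d j) / (R j - R k) ≤ Vmm M d R k := by
  intro j hj1 hjk
  obtain ⟨i₀, hi0k, hi0M, hb⟩ := Vmm_ge (M := M) (d := d) (R := R) hk2 (by omega)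
  rcases eq_or_lt_of_le hi0k with h | h
  · subst h; exact hb j hj1 hjk
  · -- k < i₀
    have hSk : Vmm M d R k < (d i₀ - d k) / (R k - R i₀) := by
      have h1 : Vmm M d R (k+1) ≤ (Finset.Icc 1 k).sup'
          (Finset.nonempty_Icc.mpr (show 1 ≤ k by omega))
          (fun j => (d i₀ - d j) / (R j - R i₀)) := by
        have := Vmm_eq (M := M) (d := d) (R := R) (show 2 ≤ k+1 by omega) hkM
        simp only [Nat.add_sub_cancel] at this
        rw [this]
        exact Finset.inf'_le _ (Finset.mem_Icc.mpr ⟨by omega, hi0M⟩)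
      have h2 : (Finset.Icc 1 k).sup'
          (Finset.nonempty_Icc.mpr (show 1 ≤ k by omega))
          (fun j => (d i₀ - d j) / (R j - R i₀)) ≤
          max (Vmm M d R k) ((d i₀ - d k) / (R k - R i₀)) := by
        apply Finset.sup'_le
        intro j' hj'
        simp only [Finset.mem_Icc] at hj'
        rcases eq_or_lt_of_le hj'.2 with h' | h'
        · subst h'; exact le_max_right _ _
        · exact le_trans (hb j' hj'.1 (by omega)) (le_max_left _ _)
      have h3 := le_trans h1 h2
      rcases max_cases (Vmm M d R k) ((d i₀ - d k) / (R k - R i₀)) with ⟨he, _⟩ | ⟨he, _⟩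
      · rw [he] at h3; linarith
      · rw [he] at h3; linarith
    have hji : (d i₀ - d j) / (R j - R i₀) ≤ Vmm M d R k := hb j hj1 hjk
    have hmin := (slope_split (M := M) (d := d) (R := R) hΔR (show j < k by omega) h hi0M).2
    by_contra hcon
    push_neg at hcon
    have := lt_min hcon hSk
    linarith

lemma L4 (hΔR : ∀ k, 1 ≤ k → k ≤ M → 0 < R (k - 1) - R k)
    (hk2 : 2 ≤ k) (hkM : k ≤ M)
    (hbe : k = M ∨ (k + 1 ≤ M ∧ Vmm M d R k < Vmm M d R (k + 1))) :
    ∀ j, 1 ≤ j → j ≤ k - 1 → (d k - d j) / (R j - R k) ≤ Vmm M d R k := by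
  rcases hbe with h | ⟨h1, h2⟩
  · intro j hj1 hjk
    have hkM' : k ≤ M := le_of_eq h
    rw [Vmm_eq hk2 hkM']
    apply Finset.le_inf'
    intro i hi
    simp only [Finset.mem_Icc] at hi
    have hik : i = k := by omega
    rw [hik]
    exact Finset.le_sup' (fun j => (d k - d j) / (R j - R k)) (Finset.mem_Icc.mpr ⟨hj1, hjk⟩)
  · exact L1 hΔR hk2 h1 h2

lemma sumW : ∀ a b : ℕ, a ≤ b → ∑ m ∈ Finset.Ioc a b, (R (m - 1) - R m) = R a - R b := by
  intro a b hab
  induction b, hab using Nat.le_induction with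
  | base => simp
  | succ b hab ih =>
    rw [Finset.sum_Ioc_succ_top (by omega), ih]
    simp

end core

noncomputable def EvF (M : ℕ) (d R : ℕ → ℝ) (k : ℕ) : ℝ :=
  ∑ m ∈ Finset.Ioc 1 k, (R (m - 1) - R m) * Vmm M d R m

section core2
variable {M : ℕ} {d R : ℕ → ℝ}

lemma EvF_one : EvF M d R 1 = 0 := by simp [EvF]

lemma EvF_succ (hk : 1 ≤ k) :
    EvF M d R (k + 1) = EvF M d R k + (R k - R (k + 1)) * Vmm M d R (k + 1) := by
  rw [EvF, Finset.sum_Ioc_succ_top (by omega)]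
  simp [EvF]

lemma P1 (hΔR : ∀ k, 1 ≤ k → k ≤ M → 0 < R (k - 1) - R k) :
    ∀ k, 2 ≤ k → k ≤ M → ∀ j, 1 ≤ j → j ≤ k →
      EvF M d R k ≤ (d j - d 1) + Vmm M d R k * (R j - R k) := by
  intro k hk2
  induction k, hk2 using Nat.le_induction with
  | base =>
    intro hM j hj1 hj2
    have hE : EvF M d R 2 = (R 1 - R 2) * Vmm M d R 2 := by
      rw [show (2:ℕ) = 1 + 1 from rfl, EvF_succ le_rfl, EvF_one]; norm_num
    have hpos : (0:ℝ) < R 1 - R 2 := by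
      have := hΔR 2 (by omega) hM; norm_num at this; linarith
    interval_cases j
    · rw [hE]; ring_nf; exact le_rfl
    · obtain ⟨j', hj'1, hj'2, hle⟩ := Vmm_le_of (M := M) (d := d) (R := R)
        le_rfl hM le_rfl hM
      have : j' = 1 := by omega
      subst this
      rw [hE]
      have h5 := (le_div_iff₀ hpos).mp hle
      nlinarith [h5]
  | succ k hk2 ih =>
    intro hk1M j hj1 hjk1
    have hkM : k ≤ M := by omega
    have hEv := EvF_succ (M := M) (d := d) (R := R) (show 1 ≤ k by omega)
    have hVm : Vmm M d R k ≤ Vmm M d R (k + 1) := Vmono hk2 hk1M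
    rcases Nat.lt_or_ge j (k + 1) with hj | hj
    · -- j ≤ k
      have base := ih hkM j hj1 (by omega)
      have hRjk : R k ≤ R j := by
        rcases eq_or_lt_of_le (show j ≤ k by omega) with h | h
        · subst h; exact le_rfl
        · exact le_of_lt (R_strict hΔR k hkM j h)
      have hm := mul_le_mul_of_nonneg_right hVm (sub_nonneg.mpr hRjk)
      nlinarith
    · -- j = k + 1
      have hj : j = k + 1 := by omega
      subst hj
      obtain ⟨j', hj'1, hj'2, hle⟩ := Vmm_le_of (M := M) (d := d) (R := R)
        (show 2 ≤ k+1 by omega) hk1M le_rfl hk1M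
      simp only [Nat.add_sub_cancel] at hj'2
      have base := ih hkM j' hj'1 hj'2
      have hpos : (0:ℝ) < R j' - R (k+1) :=
        sub_pos.mpr (R_strict hΔR (k+1) hk1M j' (by omega))
      have hprod : Vmm M d R (k+1) * (R j' - R (k+1)) ≤ d (k+1) - d j' :=
        (le_div_iff₀ hpos).mp hle
      have hRjk : R k ≤ R j' := by
        rcases eq_or_lt_of_le hj'2 with h | h
        · subst h; exact le_rfl
        · exact le_of_lt (R_strict hΔR k hkM j' h)
      have hm := mul_le_mul_of_nonneg_right hVm (sub_nonneg.mpr hRjk)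
      nlinarith

lemma P1k (hΔR : ∀ k, 1 ≤ k → k ≤ M → 0 < R (k - 1) - R k)
    (hk1 : 1 ≤ k) (hkM : k ≤ M) : EvF M d R k ≤ d k - d 1 := by
  rcases eq_or_lt_of_le hk1 with h | h
  · rw [← h, EvF_one]; simp
  · have := P1 (d := d) hΔR k (by omega) hkM k (by omega) le_rfl
    simpa using this

lemma Q2 (hΔR : ∀ k, 1 ≤ k → k ≤ M → 0 < R (k - 1) - R k) :
    ∀ k, 1 ≤ k → k ≤ M →
      (k = 1 ∨ (2 ≤ k ∧ (k = M ∨ Vmm M d R k < Vmm M d R (k + 1)))) →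
      d k - d 1 ≤ EvF M d R k := by
  intro k
  induction k using Nat.strong_induction_on with
  | _ k ih =>
    intro hk1 hkM hbe
    rcases hbe with rfl | ⟨hk2, hbe⟩
    · rw [EvF_one]; simp
    · classical
      set P : ℕ → Prop := fun m => m = 1 ∨ Vmm M d R m < Vmm M d R (m + 1) with hP
      have hP1 : P 1 := Or.inl rfl
      set j := Nat.findGreatest P (k - 1) with hjdef
      have hPj : P j := Nat.findGreatest_spec (show 1 ≤ k - 1 by omega) hP1
      have hj1 : 1 ≤ j := Nat.le_findGreatest (by omega) hP1
      have hjk : j ≤ k - 1 := Nat.findGreatest_le _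
      have hgreat : ∀ m, j < m → m ≤ k - 1 → ¬ P m := by
        intro m hm hm2
        exact Nat.findGreatest_is_greatest hm hm2
      have hconst : ∀ m, j + 1 ≤ m → m ≤ k → Vmm M d R m = Vmm M d R (j + 1) := by
        intro m hm
        induction m, hm using Nat.le_induction with
        | base => intro _; rfl
        | succ m hm ih' =>
          intro hmk
          have hge : Vmm M d R (m + 1) ≤ Vmm M d R m := by
            by_contra hc
            push_neg at hc
            exact hgreat m (by omega) (by omega) (Or.inr hc)
          have hle : Vmm M d R m ≤ Vmm M d R (m + 1) := Vmono (by omega) (by omega)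
          rw [le_antisymm hge hle]
          exact ih' (by omega)
      -- split EvF
      have hsplit : EvF M d R j + ∑ m ∈ Finset.Ioc j k, (R (m - 1) - R m) * Vmm M d R m
          = EvF M d R k := by
        rw [EvF, EvF]
        exact Finset.sum_Ioc_consecutive _ (by omega) (by omega)
      have hS2 : ∑ m ∈ Finset.Ioc j k, (R (m - 1) - R m) * Vmm M d R m
          = (R j - R k) * Vmm M d R k := by
        have h1 : ∀ m ∈ Finset.Ioc j k, (R (m - 1) - R m) * Vmm M d R m
            = (R (m - 1) - R m) * Vmm M d R (j + 1) := by
          intro m hm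
          simp only [Finset.mem_Ioc] at hm
          rw [hconst m (by omega) hm.2]
        rw [Finset.sum_congr rfl h1, ← Finset.sum_mul, sumW j k (by omega),
          hconst k (by omega) le_rfl]
      have hEj : d j - d 1 ≤ EvF M d R j := by
        apply ih j (by omega) hj1 (by omega)
        rcases hPj with h | h
        · exact Or.inl h
        · rcases eq_or_lt_of_le hj1 with h1 | h1
          · exact Or.inl h1.symm
          · exact Or.inr ⟨by omega, Or.inr (by
              have : j + 1 ≤ M := by omega
              exact h)⟩
      have hbe' : k = M ∨ (k + 1 ≤ M ∧ Vmm M d R k < Vmm M d R (k + 1)) := by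
        rcases Nat.lt_or_ge k M with h | h
        · rcases hbe with h' | h'
          · exact Or.inl h'
          · exact Or.inr ⟨by omega, h'⟩
        · exact Or.inl (by omega)
      have hL4 := L4 hΔR hk2 hkM hbe' j hj1 hjk
      have hpos : (0:ℝ) < R j - R k := sub_pos.mpr (R_strict hΔR k hkM j (by omega))
      have hprod : d k - d j ≤ Vmm M d R k * (R j - R k) := by
        have := (div_le_iff₀ hpos).mp hL4
        linarith
      linarith [hsplit, hS2]
end core2


noncomputable def Umm (M : ℕ) (d R : ℕ → ℝ) (A B : ℝ) (k : ℕ) : ℝ :=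
  if k ≤ 1 then A else min B (max A (Vmm M d R k))

noncomputable def EuF (M : ℕ) (d R : ℕ → ℝ) (A B : ℝ) (k : ℕ) : ℝ :=
  ∑ m ∈ Finset.Ioc 1 k, (R (m - 1) - R m) * Umm M d R A B m

noncomputable def alF (M : ℕ) (d R : ℕ → ℝ) (A : ℝ) (k : ℕ) : ℝ :=
  ∑ m ∈ Finset.Ioc 1 k, (R (m - 1) - R m) * (A - min (Vmm M d R m) A)

noncomputable def nuF (M : ℕ) (d R : ℕ → ℝ) (B : ℝ) (k : ℕ) : ℝ :=
  ∑ m ∈ Finset.Ioc 1 k, (R (m - 1) - R m) * (max (Vmm M d R m) B - B)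

lemma clip_id {A B : ℝ} (v : ℝ) (hAB : A ≤ B) :
    min B (max A v) = v + (A - min v A) - (max v B - B) := by
  rcases le_total v A with h | h
  · rw [max_eq_left h, min_eq_right hAB, min_eq_left h, max_eq_right (h.trans hAB)]
    ring
  · rw [min_eq_right h]
    rcases le_total v B with h2 | h2
    · rw [max_eq_right h, min_eq_right h2, max_eq_right h2]; ring
    · rw [max_eq_right h, min_eq_left h2, max_eq_left h2]; ring

section clip
variable {M : ℕ} {d R : ℕ → ℝ} {A B : ℝ}

lemma EuF_split (hAB : A ≤ B) (k : ℕ) :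
    EuF M d R A B k = EvF M d R k + alF M d R A k - nuF M d R B k := by
  rw [EuF, EvF, alF, nuF, ← Finset.sum_add_distrib, ← Finset.sum_sub_distrib]
  apply Finset.sum_congr rfl
  intro m hm
  simp only [Finset.mem_Ioc] at hm
  rw [Umm, if_neg (by omega), clip_id _ hAB]
  ring

lemma alF_term_nonneg (hΔR : ∀ k, 1 ≤ k → k ≤ M → 0 < R (k - 1) - R k)
    {m : ℕ} (hm : m ∈ Finset.Ioc 1 M) :
    0 ≤ (R (m - 1) - R m) * (A - min (Vmm M d R m) A) := by
  simp only [Finset.mem_Ioc] at hm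
  have h1 := hΔR m (by omega) hm.2
  have h2 : min (Vmm M d R m) A ≤ A := min_le_right _ _
  nlinarith

lemma alF_mono (hΔR : ∀ k, 1 ≤ k → k ≤ M → 0 < R (k - 1) - R k) (hkM : k ≤ M) :
    alF M d R A k ≤ alF M d R A M := by
  apply Finset.sum_le_sum_of_subset_of_nonneg
  · exact Finset.Ioc_subset_Ioc le_rfl hkM
  · intro m hm _
    exact alF_term_nonneg hΔR hm

lemma nuF_nonneg (hΔR : ∀ k, 1 ≤ k → k ≤ M → 0 < R (k - 1) - R k) (hkM : k ≤ M) :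
    0 ≤ nuF M d R B k := by
  apply Finset.sum_nonneg
  intro m hm
  simp only [Finset.mem_Ioc] at hm
  have h1 := hΔR m (by omega) (le_trans hm.2 hkM)
  have h2 : B ≤ max (Vmm M d R m) B := le_max_right _ _
  nlinarith

lemma EvF_M_eq (hΔR : ∀ k, 1 ≤ k → k ≤ M → 0 < R (k - 1) - R k) (hM2 : 2 ≤ M) :
    EvF M d R M = d M - d 1 :=
  le_antisymm (P1k hΔR (by omega) le_rfl) (Q2 hΔR M (by omega) le_rfl (Or.inr ⟨hM2, Or.inl rfl⟩))

lemma Umm_ge_A (hAB : A ≤ B) (k : ℕ) : A ≤ Umm M d R A B k := by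
  rw [Umm]
  split
  · exact le_rfl
  · exact le_min hAB (le_max_left _ _)

lemma Umm_le_B (hAB : A ≤ B) (k : ℕ) : Umm M d R A B k ≤ B := by
  rw [Umm]
  split
  · exact hAB
  · exact min_le_left _ _

lemma Umono (hAB : A ≤ B) (hk1 : 1 ≤ k) (hkM : k + 1 ≤ M) :
    Umm M d R A B k ≤ Umm M d R A B (k + 1) := by
  rcases eq_or_lt_of_le hk1 with h | h
  · rw [← h]
    exact Umm_ge_A hAB _
  · rw [Umm, Umm, if_neg (by omega), if_neg (by omega)]
    exact min_le_min le_rfl (max_le_max le_rfl (Vmono (by omega) hkM))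

/-- C1 -/
lemma C1 (hΔR : ∀ k, 1 ≤ k → k ≤ M → 0 < R (k - 1) - R k) (hAB : A ≤ B)
    (hM2 : 2 ≤ M) (hk1 : 1 ≤ k) (hkM : k ≤ M) :
    EuF M d R A B k - (d k - d 1) ≤ EuF M d R A B M - (d M - d 1) + nuF M d R B M := by
  rw [EuF_split hAB, EuF_split hAB]
  have h1 : EvF M d R k ≤ d k - d 1 := P1k hΔR hk1 hkM
  have h2 : EvF M d R M = d M - d 1 := EvF_M_eq hΔR hM2
  have h3 : alF M d R A k ≤ alF M d R A M := alF_mono hΔR hkM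
  have h4 : 0 ≤ nuF M d R B k := nuF_nonneg hΔR hkM
  linarith

/-- C2 -/
lemma C2 (hΔR : ∀ k, 1 ≤ k → k ≤ M → 0 < R (k - 1) - R k) (hAB : A ≤ B)
    (hM2 : 2 ≤ M) (hk2 : 2 ≤ k) (hkM : k ≤ M)
    (hU : Umm M d R A B (k - 1) < Umm M d R A B k) :
    EuF M d R A B (k - 1) - (d (k - 1) - d 1) = EuF M d R A B M - (d M - d 1) + nuF M d R B M := by
  have hUk : Umm M d R A B k = min B (max A (Vmm M d R k)) := by
    rw [Umm, if_neg (by omega)]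
  -- A < V k
  have hVkA : A < Vmm M d R k := by
    have h1 : A ≤ Umm M d R A B (k - 1) := Umm_ge_A hAB _
    have h2 : A < min B (max A (Vmm M d R k)) := by rw [← hUk]; linarith
    have h3 : A < max A (Vmm M d R k) := lt_of_lt_of_le h2 (min_le_right _ _)
    rcases max_cases A (Vmm M d R k) with ⟨he, _⟩ | ⟨he, _⟩
    · rw [he] at h3; linarith
    · rw [he] at h3; exact h3
  -- V m > A for m ≥ k
  have hVgtA : ∀ m, k ≤ m → m ≤ M → A < Vmm M d R m := fun m hm hmM =>
    lt_of_lt_of_le hVkA (Vmono_chain hk2 hm hmM)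
  -- alF (k-1) = alF M
  have hal : alF M d R A (k - 1) = alF M d R A M := by
    rw [alF, alF, ← Finset.sum_Ioc_consecutive _ (show 1 ≤ k - 1 by omega) (show k - 1 ≤ M by omega)]
    have hz : ∀ m ∈ Finset.Ioc (k - 1) M, (R (m - 1) - R m) * (A - min (Vmm M d R m) A) = 0 := by
      intro m hm
      simp only [Finset.mem_Ioc] at hm
      have := hVgtA m (by omega) hm.2
      rw [min_eq_right (le_of_lt this)]
      ring
    rw [Finset.sum_eq_zero hz]
    ring
  -- nuF (k-1) = 0
  have hnu : nuF M d R B (k - 1) = 0 := by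
    rcases eq_or_lt_of_le hk2 with h | h
    · rw [← h]; simp [nuF]
    · -- k ≥ 3, so k - 1 ≥ 2
      have hVB : Vmm M d R (k - 1) < B := by
        have h1 : Umm M d R A B (k - 1) < B :=
          lt_of_lt_of_le hU (Umm_le_B hAB _)
        rw [Umm, if_neg (by omega)] at h1
        rcases min_cases B (max A (Vmm M d R (k - 1))) with ⟨he, _⟩ | ⟨he, _⟩
        · rw [he] at h1; linarith
        · rw [he] at h1
          exact lt_of_le_of_lt (le_max_right _ _) h1
      apply Finset.sum_eq_zero
      intro m hm
      simp only [Finset.mem_Ioc] at hm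
      have hVm : Vmm M d R m < B :=
        lt_of_le_of_lt (Vmono_chain (by omega) (by omega : m ≤ k - 1) (by omega)) hVB
      rw [max_eq_right (le_of_lt hVm)]
      ring
  -- EvF (k-1) = d (k-1) - d 1
  have hEv : EvF M d R (k - 1) = d (k - 1) - d 1 := by
    rcases eq_or_lt_of_le hk2 with h | h
    · rw [← h]; simp [EvF_one]
    · -- k ≥ 3
      have hVlt : Vmm M d R (k - 1) < Vmm M d R k := by
        by_contra hcon
        push_neg at hcon
        have : Umm M d R A B k ≤ Umm M d R A B (k - 1) := by
          rw [hUk, Umm, if_neg (by omega)]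
          exact min_le_min le_rfl (max_le_max le_rfl hcon)
        linarith
      apply le_antisymm (P1k hΔR (by omega) (by omega))
      apply Q2 hΔR (k - 1) (by omega) (by omega)
      refine Or.inr ⟨by omega, Or.inr ?_⟩
      have : k - 1 + 1 = k := by omega
      rw [this]
      exact hVlt
  have hEvM : EvF M d R M = d M - d 1 := EvF_M_eq hΔR hM2
  rw [EuF_split hAB, EuF_split hAB, hal, hnu, hEv, hEvM]
  ring

/-- C3 -/
lemma C3 (hΔR : ∀ k, 1 ≤ k → k ≤ M → 0 < R (k - 1) - R k) (hAB : A ≤ B)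
    (hM2 : 2 ≤ M) (hnu : nuF M d R B M ≠ 0) : Umm M d R A B M = B := by
  rcases le_or_gt (Vmm M d R M) B with h | h
  · exfalso
    apply hnu
    apply Finset.sum_eq_zero
    intro m hm
    simp only [Finset.mem_Ioc] at hm
    have hVm : Vmm M d R m ≤ B :=
      le_trans (Vmono_chain (by omega) hm.2 le_rfl) h
    rw [max_eq_right hVm]
    ring
  · rw [Umm, if_neg (by omega)]
    exact min_eq_left (le_of_lt (lt_of_lt_of_le h (le_max_right _ _)))

end clip

theorem stmt_14 (M : ℕ) (hM : 1 ≤ M) (d R : ℕ → ℝ)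
    (hΔd : ∀ k, 1 ≤ k → k ≤ M → 0 < d k - d (k - 1))
    (hΔR : ∀ k, 1 ≤ k → k ≤ M → 0 < R (k - 1) - R k)
    (c : ℝ) (hc : 0 < c)  -- c = σ²/n
    (η : ℝ) (hη0 : 0 < η) (hη1 : η < 1)
    (βsol : ℕ → ℝ) (hβ1 : βsol 1 = 0)
    (hβ : ∀ k, ∀ (h2 : 2 ≤ k) (hkM : k ≤ M),
      βsol k = 1 - min 1 (max 0 ((1 / (1 - η)) * (1 - η / 2 -
        c * (Finset.Icc k M).inf' (Finset.nonempty_Icc.mpr hkM)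
          (fun i => (Finset.Icc 1 (k - 1)).sup'
            (Finset.nonempty_Icc.mpr (Nat.le_sub_of_add_le h2))
            (fun j => (d i - d j) / (R j - R i))))))) :
    ((1 : ℝ) - βsol 1 = 1 ∧
      (∀ k, 1 ≤ k → k < M → (1 - βsol (k + 1)) ≤ (1 - βsol k)) ∧
      0 ≤ 1 - βsol M) ∧
    (∀ cs : ℕ → ℝ, cs 1 = 1 → (∀ k, 1 ≤ k → k < M → cs (k + 1) ≤ cs k) → 0 ≤ cs M →
      (η / (1 - η)) * R 0 * (1 - βsol 1) +
        ∑ k ∈ Finset.Icc 1 M, (R (k - 1) - R k) *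
          ((1 - βsol k) - (1 / 2) * ((2 - η) / (1 - η)
            - (2 / (1 - η)) * c * ((d k - d (k - 1)) / (R (k - 1) - R k)))) ^ 2
      ≤ (η / (1 - η)) * R 0 * cs 1 +
        ∑ k ∈ Finset.Icc 1 M, (R (k - 1) - R k) *
          (cs k - (1 / 2) * ((2 - η) / (1 - η)
            - (2 / (1 - η)) * c * ((d k - d (k - 1)) / (R (k - 1) - R k)))) ^ 2) := by
  have h1η : (0:ℝ) < 1 - η := by linarith
  set A : ℝ := η / (2 * c) with hAdef
  set B : ℝ := (2 - η) / (2 * c) with hBdef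
  have hAB : A ≤ B := by
    rw [hAdef, hBdef]
    apply div_le_div_of_nonneg_right ?_ (by linarith)
    · linarith
  set L : ℝ → ℝ := fun z => (1 / (1 - η)) * (1 - η / 2 - c * z) with hLdef
  have hLA : L A = 1 := by
    rw [hLdef, hAdef]
    field_simp
    ring
  have hLB : L B = 0 := by
    rw [hLdef, hBdef]
    field_simp
    ring
  have hLmono : ∀ x y : ℝ, x ≤ y → L y ≤ L x := by
    intro x y hxy
    rw [hLdef]
    simp only
    have h1 : c * x ≤ c * y := mul_le_mul_of_nonneg_left hxy (le_of_lt hc)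
    have h2 : (0:ℝ) < 1 / (1 - η) := by positivity
    nlinarith
  -- clip commutes with L
  have hclip : ∀ v : ℝ, min 1 (max 0 (L v)) = L (min B (max A v)) := by
    intro v
    rcases le_total v A with h | h
    · rw [max_eq_left h, min_eq_right hAB, hLA]
      have : (1:ℝ) ≤ L v := by rw [← hLA]; exact hLmono v A h
      rw [min_eq_left (le_trans this (le_max_right _ _))]
    · rw [max_eq_right h]
      rcases le_total v B with h2 | h2
      · rw [min_eq_right h2]
        have hv1 : L v ≤ 1 := by rw [← hLA]; exact hLmono A v h
        have hv0 : 0 ≤ L v := by rw [← hLB]; exact hLmono v B h2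
        rw [max_eq_right hv0, min_eq_right hv1]
      · rw [min_eq_left h2, hLB]
        have hv0 : L v ≤ 0 := by rw [← hLB]; exact hLmono B v h2
        rw [max_eq_left hv0]
        exact min_eq_right (by norm_num)
  -- the link: 1 - βsol k = L (Umm k)
  have hcU : ∀ k, 1 ≤ k → k ≤ M → 1 - βsol k = L (Umm M d R A B k) := by
    intro k hk1 hkM
    rcases eq_or_lt_of_le hk1 with h | h
    · rw [← h, hβ1, Umm, if_pos (le_refl 1), hLA]
      norm_num
    · have hk2 : 2 ≤ k := h
      have hVk := Vmm_eq (M := M) (d := d) (R := R) hk2 hkM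
      rw [hβ k hk2 hkM, ← hVk, sub_sub_cancel, Umm, if_neg (by omega)]
      exact hclip (Vmm M d R k)
  refine ⟨⟨by rw [hβ1]; norm_num, ?_, ?_⟩, ?_⟩
  · -- monotonicity
    intro k hk1 hkM
    rw [hcU k hk1 (by omega), hcU (k+1) (by omega) (by omega)]
    exact hLmono _ _ (Umono hAB hk1 (by omega))
  · -- 0 ≤ 1 - βsol M
    rw [hcU M hM le_rfl, ← hLB]
    exact hLmono _ _ (Umm_le_B hAB M)
  · -- optimality
    intro cs hcs1 hcsmono hcsM
    rw [hβ1, hcs1]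
    rcases eq_or_lt_of_le hM with hM1 | hM2'
    · -- M = 1
      rw [← hM1, Finset.Icc_self, Finset.sum_singleton, Finset.sum_singleton, hcs1, hβ1]
      norm_num
    have hM2 : 2 ≤ M := hM2'
    set t : ℕ → ℝ := fun k => (1 / 2) * ((2 - η) / (1 - η)
      - (2 / (1 - η)) * c * ((d k - d (k - 1)) / (R (k - 1) - R k))) with htdef
    set x : ℕ → ℝ := fun k => cs k - (1 - βsol k) with hxdef
    have hx1 : x 1 = 0 := by rw [hxdef]; simp [hcs1, hβ1]
    -- the key cross-term inequality
    have hkey : ∀ n : ℕ, ∀ k, 2 ≤ k → k ≤ M + 1 → M + 1 - k = n →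
        ∑ m ∈ Finset.Ioc (k - 1) M,
          ((R (m - 1) - R m) * Umm M d R A B m - (d m - d (m - 1))) * x m
        ≤ ((EuF M d R A B M - EuF M d R A B (k - 1)) - (d M - d (k - 1))) * x (k - 1)
          - nuF M d R B M * (x M - x (k - 1)) := by
      intro n
      induction n with
      | zero =>
        intro k hk2 hkM1 hn
        obtain rfl : k = M + 1 := by omega
        simp only [Nat.add_sub_cancel]
        rw [Finset.Ioc_self, Finset.sum_empty]
        apply le_of_eq
        ring
      | succ n ih =>
        intro k hk2 hkM1 hn
        have hkM : k ≤ M := by omega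
        have hins : Finset.Ioc (k - 1) M = insert k (Finset.Ioc k M) := by
          ext y
          simp only [Finset.mem_Ioc, Finset.mem_insert]
          omega
        rw [hins, Finset.sum_insert (by simp)]
        have hIH := ih (k + 1) (by omega) (by omega) (by omega)
        simp only [Nat.add_sub_cancel] at hIH
        -- abbreviations
        set a : ℝ := (EuF M d R A B M - EuF M d R A B (k - 1)) - (d M - d (k - 1)) with hadef
        set b : ℝ := (EuF M d R A B M - EuF M d R A B k) - (d M - d k) with hbdef
        set ν : ℝ := nuF M d R B M with hνdef
        set hk_ : ℝ := (R (k - 1) - R k) * Umm M d R A B k - (d k - d (k - 1)) with hhkdef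
        have hEstep : EuF M d R A B k = EuF M d R A B (k - 1)
            + (R (k - 1) - R k) * Umm M d R A B k := by
          rw [EuF, EuF, ← Finset.sum_Ioc_consecutive _ (show 1 ≤ k - 1 by omega) (show k - 1 ≤ k by omega)]
          have : Finset.Ioc (k - 1) k = {k} := by
            ext y; simp only [Finset.mem_Ioc, Finset.mem_singleton]; omega
          rw [this, Finset.sum_singleton]
        have hHH : a = hk_ + b := by
          rw [hadef, hbdef, hhkdef, hEstep]; ring
        -- (a + ν) * (x k - x (k-1)) ≤ 0
        have hC1 := C1 (d := d) (A := A) (B := B) hΔR hAB hM2 (show 1 ≤ k - 1 by omega) (show k - 1 ≤ M by omega)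
        have hHge : -ν ≤ a := by rw [hadef, hνdef]; linarith
        have hUm : Umm M d R A B (k - 1) ≤ Umm M d R A B k := by
          have h := Umono (M := M) (d := d) (R := R) hAB (show 1 ≤ k - 1 by omega)
            (show k - 1 + 1 ≤ M by omega)
          rwa [show k - 1 + 1 = k by omega] at h
        have hstep' : a * x k + ν * x k - a * x (k - 1) - ν * x (k - 1) ≤ 0 := by
          rcases eq_or_lt_of_le hUm with hUeq | hUlt
          · -- same block: x k - x (k-1) = cs k - cs (k-1) ≤ 0
            have hceq : (1 : ℝ) - βsol (k - 1) = 1 - βsol k := by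
              rw [hcU (k - 1) (by omega) (by omega), hcU k (by omega) hkM, hUeq]
            have hcs : cs k ≤ cs (k - 1) := by
              have h := hcsmono (k - 1) (by omega) (by omega)
              rwa [show k - 1 + 1 = k by omega] at h
            have hxd : x k - x (k - 1) ≤ 0 := by
              rw [hxdef]; simp only; rw [← hceq]; linarith
            have h0 : 0 ≤ (a + ν) * (x (k - 1) - x k) :=
              mul_nonneg (by linarith) (by linarith)
            have h1 : (a + ν) * (x (k - 1) - x k)
                = a * x (k - 1) + ν * x (k - 1) - a * x k - ν * x k := by ring
            linarith [h0, h1]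
          · -- strict increase: a = -ν by C2
            have hC2 := C2 (d := d) (A := A) (B := B) hΔR hAB hM2 hk2 hkM hUlt
            have haν : a + ν = 0 := by rw [hadef, hνdef]; linarith
            have h0 : (a + ν) * (x k - x (k - 1)) = 0 :=
              mul_eq_zero_of_left haν _
            have h1 : (a + ν) * (x k - x (k - 1))
                = a * x k + ν * x k - a * x (k - 1) - ν * x (k - 1) := by ring
            linarith [h0, h1]
        calc hk_ * x k + ∑ m ∈ Finset.Ioc k M,
              ((R (m - 1) - R m) * Umm M d R A B m - (d m - d (m - 1))) * x m
            ≤ hk_ * x k + (b * x k - ν * (x M - x k)) := by linarith [hIH]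
          _ = a * x k - ν * (x M - x k) := by rw [hHH]; ring
          _ ≤ a * x (k - 1) - ν * (x M - x (k - 1)) := by linarith [hstep']
    -- apply at k = 2
    have hkey2 := hkey (M - 1) 2 le_rfl (by omega) (by omega)
    norm_num at hkey2
    rw [hx1] at hkey2
    have hν0 : 0 ≤ nuF M d R B M := nuF_nonneg (d := d) (B := B) hΔR le_rfl
    have hSle : ∑ m ∈ Finset.Ioc 1 M,
        ((R (m - 1) - R m) * Umm M d R A B m - (d m - d (m - 1))) * x m ≤ 0 := by
      rcases eq_or_lt_of_le hν0 with hν | hν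
      · calc _ ≤ _ := hkey2
          _ ≤ (0:ℝ) := by rw [← hν]; ring_nf; exact le_rfl
      · have hUMB := C3 (d := d) (A := A) (B := B) hΔR hAB hM2 (ne_of_gt hν)
        have hxM : 0 ≤ x M := by
          rw [hxdef]
          simp only
          rw [hcU M (by omega) le_rfl, hUMB, hLB]
          linarith
        calc _ ≤ _ := hkey2
          _ ≤ (0:ℝ) := by nlinarith
    -- convert to cross terms
    have hcross : 0 ≤ ∑ k ∈ Finset.Icc 1 M,
        (R (k - 1) - R k) * ((1 - βsol k) - t k) * x k := by
      have hIcc : Finset.Icc 1 M = insert 1 (Finset.Ioc 1 M) := by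
        ext y
        simp only [Finset.mem_Icc, Finset.mem_Ioc, Finset.mem_insert]
        omega
      rw [hIcc, Finset.sum_insert (by simp)]
      rw [hx1, mul_zero, zero_add]
      have hterm : ∀ m ∈ Finset.Ioc 1 M,
          (R (m - 1) - R m) * ((1 - βsol m) - t m) * x m
          = (c / (1 - η)) * (((d m - d (m - 1)) - (R (m - 1) - R m) * Umm M d R A B m) * x m) := by
        intro m hm
        simp only [Finset.mem_Ioc] at hm
        have hw : (0:ℝ) < R (m - 1) - R m := hΔR m (by omega) hm.2
        have hcm : 1 - βsol m = L (Umm M d R A B m) := hcU m (by omega) hm.2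
        rw [hcm, htdef, hLdef]
        simp only
        field_simp
        ring
      rw [Finset.sum_congr rfl hterm, ← Finset.mul_sum]
      have hfac : (0:ℝ) < c / (1 - η) := by positivity
      have : ∑ m ∈ Finset.Ioc 1 M,
          (((d m - d (m - 1)) - (R (m - 1) - R m) * Umm M d R A B m) * x m)
          = - ∑ m ∈ Finset.Ioc 1 M,
          ((R (m - 1) - R m) * Umm M d R A B m - (d m - d (m - 1))) * x m := by
        rw [← Finset.sum_neg_distrib]
        apply Finset.sum_congr rfl
        intro m _
        ring
      rw [this]
      have h2 : 0 ≤ - ∑ m ∈ Finset.Ioc 1 M,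
          ((R (m - 1) - R m) * Umm M d R A B m - (d m - d (m - 1))) * x m := by linarith
      positivity
    -- final quadratic expansion
    have hexp : ∀ k ∈ Finset.Icc 1 M,
        (R (k - 1) - R k) * (cs k - t k) ^ 2
        = (R (k - 1) - R k) * ((1 - βsol k) - t k) ^ 2
          + (R (k - 1) - R k) * (x k) ^ 2
          + 2 * ((R (k - 1) - R k) * ((1 - βsol k) - t k) * x k) := by
      intro k hk
      rw [hxdef]
      simp only
      ring
    have hsq : 0 ≤ ∑ k ∈ Finset.Icc 1 M, (R (k - 1) - R k) * (x k) ^ 2 := by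
      apply Finset.sum_nonneg
      intro k hk
      simp only [Finset.mem_Icc] at hk
      have := hΔR k hk.1 hk.2
      positivity
    have hfin : ∑ k ∈ Finset.Icc 1 M, (R (k - 1) - R k) * ((1 - βsol k) - t k) ^ 2
        ≤ ∑ k ∈ Finset.Icc 1 M, (R (k - 1) - R k) * (cs k - t k) ^ 2 := by
      rw [Finset.sum_congr rfl hexp, Finset.sum_add_distrib, Finset.sum_add_distrib,
        ← Finset.mul_sum]
      linarith
    linarith [hfin]
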